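/- Let n ≥ 1 and let q_1,...,q_n be feasible for Wilkinson's linear program. Then q_1 − q_n ≤ (1/2)·(ln n + ∑_{k=2}^n (ln k)/(k−1)). -/

import Mathlib

open BigOperators

/-- `q 1, ..., q n` is feasible for Wilkinson's linear program:
`∑_{i=1}^k q_i ≤ (k/2) ln k + k q_k` for every `k = 1, ..., n`. -/
def WilkFeasible (n : ℕ) (q : ℕ → ℝ) : Prop :=
  ∀ k : ℕ, 1 ≤ k → k ≤ n →
    ∑ i ∈ Finset.Icc 1 k, q i ≤ ((k : ℝ) / 2) * Real.log k + (k : ℝ) * q k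

/-- Wilkinson's LP bound: any feasible point satisfies
`q_1 - q_n ≤ (1/2)(ln n + ∑_{k=2}^n (ln k)/(k-1))`. -/
theorem wilk_lp_bound (n : ℕ) (hn : 1 ≤ n) (q : ℕ → ℝ) (hq : WilkFeasible n q) :
    q 1 - q n ≤
      (1 / 2) * (Real.log n + ∑ k ∈ Finset.Icc 2 n, Real.log k / ((k : ℝ) - 1)) := by
  set S : ℕ → ℝ := fun k => ∑ i ∈ Finset.Icc 1 k, q i with hS
  -- one-step decrease of averages
  have key : ∀ k : ℕ, 1 ≤ k → k + 1 ≤ n →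
      S k / k - S (k + 1) / (k + 1) ≤ Real.log (k + 1) / (2 * k) := by
    intro k hk hkn
    have kpos : (0 : ℝ) < k := by exact_mod_cast hk
    have k1pos : (0 : ℝ) < (k : ℝ) + 1 := by linarith
    have hcon := hq (k + 1) (by omega) hkn
    have hsplit : S (k + 1) = S k + q (k + 1) := by
      simpa [hS] using Finset.sum_Icc_succ_top (by omega : 1 ≤ k + 1) q
    push_cast at hcon
    -- S k - k * q (k+1) ≤ ((k+1)/2) * log (k+1)
    have h1 : S k - (k : ℝ) * q (k + 1) ≤ (((k : ℝ) + 1) / 2) * Real.log ((k : ℝ) + 1) := by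
      have hcon2 : S (k + 1) ≤ (((k : ℝ) + 1) / 2) * Real.log ((k : ℝ) + 1) + ((k : ℝ) + 1) * q (k + 1) := hcon
      rw [hsplit] at hcon2
      linarith
    rw [hsplit]
    push_cast
    rw [div_sub_div _ _ (ne_of_gt kpos) (ne_of_gt k1pos),
      div_le_div_iff₀ (by positivity) (by positivity)]
    nlinarith [mul_le_mul_of_nonneg_right h1 (le_of_lt (by positivity : (0:ℝ) < 2 * k)),
      Real.log_nonneg (by linarith : (1:ℝ) ≤ (k:ℝ) + 1)]
  -- telescoping
  have main : ∀ m : ℕ, 1 ≤ m → m ≤ n →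
      S 1 / 1 - S m / m ≤ ∑ k ∈ Finset.Icc 2 m, Real.log k / (2 * ((k : ℝ) - 1)) := by
    intro m hm
    induction m, hm using Nat.le_induction with
    | base => intro _; simp
    | succ m hm ih =>
      intro hmn
      have h1 := ih (by omega)
      have h2 := key m hm hmn
      rw [Finset.sum_Icc_succ_top (by omega : 2 ≤ m + 1)]
      push_cast
      push_cast at h2
      have : ((m : ℝ) + 1) - 1 = (m : ℝ) := by ring
      rw [this]
      linarith
  have hmain := main n hn le_rfl
  -- last step: S n / n - q n ≤ log n / 2
  have npos : (0 : ℝ) < n := by exact_mod_cast hn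
  have hlast : S n / n - q n ≤ Real.log n / 2 := by
    have hcon := hq n hn le_rfl
    rw [sub_le_iff_le_add, div_le_iff₀ npos, hS]
    nlinarith [hcon]
  have hq1 : q 1 = S 1 / 1 := by simp [hS]
  have hsum : (1 / 2 : ℝ) * (∑ k ∈ Finset.Icc 2 n, Real.log k / ((k : ℝ) - 1)) =
      ∑ k ∈ Finset.Icc 2 n, Real.log k / (2 * ((k : ℝ) - 1)) := by
    rw [Finset.mul_sum]
    exact Finset.sum_congr rfl fun k hk => by
      have hk2 : (2 : ℕ) ≤ k := (Finset.mem_Icc.mp hk).1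
      have : (k : ℝ) - 1 ≠ 0 := by
        have : (2 : ℝ) ≤ (k : ℝ) := by exact_mod_cast hk2
        linarith
      field_simp
  calc q 1 - q n = (S 1 / 1 - S n / n) + (S n / n - q n) := by rw [hq1]; ring
    _ ≤ (∑ k ∈ Finset.Icc 2 n, Real.log k / (2 * ((k : ℝ) - 1))) + Real.log n / 2 := by
        linarith
    _ = (1 / 2) * (Real.log n + ∑ k ∈ Finset.Icc 2 n, Real.log k / ((k : ℝ) - 1)) := by
        rw [mul_add, hsum]; ring
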